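/- Let L be a linear subspace of real symmetric m×m matrices containing at least one positive definite matrix, and let S be a real symmetric m×m matrix. Then the function K ↦ log det K − trace(S·K) attains a maximum on the set {K ∈ L : K positive definite} if and only if there exists a positive definite matrix Σ with trace(Σ·K) = trace(S·K) for all K ∈ L. In other words, the maximum likelihood estimate exists for S if and only if fiber_L(S) is non-empty. -/

import Mathlib

open Matrix Finset Polynomial

section Helpers

variable {m : ℕ}


lemma quad_expand (M : Matrix (Fin m) (Fin m) ℝ) (x : Fin m → ℝ) :
    x ⬝ᵥ M *ᵥ x = ∑ i, ∑ j, x i * M i j * x j := by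
  simp [dotProduct, mulVec, Finset.mul_sum, mul_assoc]

lemma sq_le_dot (x : Fin m → ℝ) (i : Fin m) : x i ^ 2 ≤ x ⬝ᵥ x := by
  have : x ⬝ᵥ x = ∑ k, x k ^ 2 := by simp [dotProduct, sq]
  rw [this]
  exact Finset.single_le_sum (fun k _ => sq_nonneg (x k)) (Finset.mem_univ i)

lemma abs_mul_le_dot (x : Fin m → ℝ) (i j : Fin m) : |x i * x j| ≤ x ⬝ᵥ x := by
  rw [abs_le]
  constructor <;>
    nlinarith [sq_le_dot x i, sq_le_dot x j, sq_nonneg (x i - x j), sq_nonneg (x i + x j)]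

lemma abs_quad_le (M : Matrix (Fin m) (Fin m) ℝ) (x : Fin m → ℝ) :
    |x ⬝ᵥ M *ᵥ x| ≤ (∑ i, ∑ j, |M i j|) * (x ⬝ᵥ x) := by
  rw [quad_expand]
  calc |∑ i, ∑ j, x i * M i j * x j| ≤ ∑ i, ∑ j, |x i * M i j * x j| := by
        refine (Finset.abs_sum_le_sum_abs _ _).trans ?_
        exact Finset.sum_le_sum fun i _ => Finset.abs_sum_le_sum_abs _ _
    _ ≤ ∑ i, ∑ j, |M i j| * (x ⬝ᵥ x) := by
        refine Finset.sum_le_sum fun i _ => Finset.sum_le_sum fun j _ => ?_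
        have h1 : |x i * M i j * x j| = |M i j| * |x i * x j| := by
          rw [abs_mul, abs_mul, abs_mul]; ring
        rw [h1]
        exact mul_le_mul_of_nonneg_left (abs_mul_le_dot x i j) (abs_nonneg _)
    _ = (∑ i, ∑ j, |M i j|) * (x ⬝ᵥ x) := by
        rw [Finset.sum_mul]
        exact Finset.sum_congr rfl fun i _ => (Finset.sum_mul _ _ _).symm

lemma dot_self_nonneg (x : Fin m → ℝ) : 0 ≤ x ⬝ᵥ x :=
  Finset.sum_nonneg fun i _ => mul_self_nonneg (x i)

lemma mulVec_dot_mulVec (P Q : Matrix (Fin m) (Fin m) ℝ) (x y : Fin m → ℝ) :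
    (P *ᵥ x) ⬝ᵥ (Q *ᵥ y) = x ⬝ᵥ ((Pᵀ * Q) *ᵥ y) := by
  conv_rhs => rw [← mulVec_mulVec, dotProduct_mulVec x, vecMul_transpose]

open scoped MatrixOrder in
lemma posdef_quad_lower {A : Matrix (Fin m) (Fin m) ℝ} (hA : A.PosDef) :
    ∃ α : ℝ, 0 < α ∧ ∀ x, α * (x ⬝ᵥ x) ≤ x ⬝ᵥ A *ᵥ x := by
  classical
  set C : ℝ := ((∑ i, ∑ j, |A⁻¹ i j|) + 1 : ℝ) with hC
  have hCpos : 0 < C := by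
    rw [hC]
    have : 0 ≤ ∑ i, ∑ j, |A⁻¹ i j| :=
      Finset.sum_nonneg fun i _ => Finset.sum_nonneg fun j _ => abs_nonneg _
    linarith
  refine ⟨C⁻¹, by positivity, fun x => ?_⟩
  set B := CFC.sqrt A with hBdef
  have hB : B.PosSemidef := nonneg_iff_posSemidef.mp (CFC.sqrt_nonneg A)
  have hBB : B * B = A := CFC.sqrt_mul_sqrt_self A (nonneg_iff_posSemidef.mpr hA.posSemidef)
  have hBt : Bᵀ = B := by
    have := hB.1
    rwa [Matrix.IsHermitian, conjTranspose_eq_transpose_of_trivial] at this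
  have hdetB : B.det ≠ 0 := by
    intro h
    have : A.det = 0 := by rw [← hBB, det_mul, h, mul_zero]
    exact hA.det_pos.ne' this
  have hBinv : B * B⁻¹ = 1 := mul_nonsing_inv _ hdetB.isUnit
  have hBinvT : B⁻¹ᵀ = B⁻¹ := by rw [transpose_nonsing_inv, hBt]
  have hAinv : B⁻¹ * B⁻¹ = A⁻¹ := by rw [← Matrix.mul_inv_rev, hBB]
  set u := B *ᵥ x with hu
  set v := B⁻¹ *ᵥ x with hv
  have huv : u ⬝ᵥ v = x ⬝ᵥ x := by
    rw [hu, hv, mulVec_dot_mulVec, hBt, hBinv, one_mulVec]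
  have huu : u ⬝ᵥ u = x ⬝ᵥ A *ᵥ x := by
    rw [hu, mulVec_dot_mulVec, hBt, hBB]
  have hvv : v ⬝ᵥ v = x ⬝ᵥ A⁻¹ *ᵥ x := by
    rw [hv, mulVec_dot_mulVec, hBinvT, hAinv]
  have hCS : (u ⬝ᵥ v) ^ 2 ≤ (u ⬝ᵥ u) * (v ⬝ᵥ v) := by
    have := Finset.sum_mul_sq_le_sq_mul_sq Finset.univ u v
    simpa [dotProduct, sq] using this
  have hq : 0 ≤ x ⬝ᵥ A *ᵥ x := by
    have := hA.posSemidef.dotProduct_mulVec_nonneg x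
    simpa using this
  have hAix : x ⬝ᵥ A⁻¹ *ᵥ x ≤ C * (x ⬝ᵥ x) := by
    have h1 : x ⬝ᵥ A⁻¹ *ᵥ x ≤ |x ⬝ᵥ A⁻¹ *ᵥ x| := le_abs_self _
    have h2 := abs_quad_le A⁻¹ x
    have h3 : (∑ i, ∑ j, |A⁻¹ i j|) * (x ⬝ᵥ x) ≤ C * (x ⬝ᵥ x) :=
      mul_le_mul_of_nonneg_right (by rw [hC]; linarith) (dot_self_nonneg x)
    linarith
  rcases eq_or_lt_of_le (dot_self_nonneg x) with hd | hd
  · rw [← hd, mul_zero]; exact hq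
  · have key : (x ⬝ᵥ x) ^ 2 ≤ (x ⬝ᵥ A *ᵥ x) * (C * (x ⬝ᵥ x)) := by
      calc (x ⬝ᵥ x) ^ 2 = (u ⬝ᵥ v) ^ 2 := by rw [huv]
        _ ≤ (u ⬝ᵥ u) * (v ⬝ᵥ v) := hCS
        _ = (x ⬝ᵥ A *ᵥ x) * (x ⬝ᵥ A⁻¹ *ᵥ x) := by rw [huu, hvv]
        _ ≤ (x ⬝ᵥ A *ᵥ x) * (C * (x ⬝ᵥ x)) := mul_le_mul_of_nonneg_left hAix hq
    have h4 : x ⬝ᵥ x ≤ C * (x ⬝ᵥ A *ᵥ x) := by nlinarith [key, hd]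
    rw [inv_mul_le_iff₀ hCpos]
    exact h4


open scoped MatrixOrder in
lemma trace_mul_psd_nonneg {A B : Matrix (Fin m) (Fin m) ℝ}
    (hA : A.PosSemidef) (hB : B.PosSemidef) : 0 ≤ (A * B).trace := by
  classical
  obtain ⟨C, rfl⟩ := CStarAlgebra.nonneg_iff_eq_star_mul_self.mp (nonneg_iff_posSemidef.mpr hB)
  simp only [star_eq_conjTranspose] at hB ⊢
  have h1 : (A * (Cᴴ * C)).trace = (C * A * Cᴴ).trace := by
    rw [← Matrix.mul_assoc, trace_mul_comm, Matrix.mul_assoc, ← Matrix.mul_assoc]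
  rw [h1, Matrix.trace]
  refine Finset.sum_nonneg fun i _ => ?_
  have h2 : (C * A * Cᴴ).diag i = (fun j => C i j) ⬝ᵥ A *ᵥ (fun j => C i j) := by
    simp only [diag_apply, Matrix.mul_apply, conjTranspose_apply, star_trivial,
      dotProduct, mulVec, Finset.sum_mul, Finset.mul_sum]
    rw [Finset.sum_comm]
    refine Finset.sum_congr rfl fun k _ => Finset.sum_congr rfl fun j _ => by ring
  rw [h2]
  simpa using hA.dotProduct_mulVec_nonneg (fun j => C i j)

lemma trace_eq_sum_eigenvalues {A : Matrix (Fin m) (Fin m) ℝ} (hA : A.IsHermitian) :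
    A.trace = ∑ i, hA.eigenvalues i := by
  classical
  simpa using hA.trace_eq_sum_eigenvalues

lemma psd_diag_nonneg {K : Matrix (Fin m) (Fin m) ℝ} (hK : K.PosSemidef) (i : Fin m) :
    0 ≤ K i i := by
  have := hK.dotProduct_mulVec_nonneg (Pi.single i 1)
  simpa [mulVec_single, dotProduct_single, single_dotProduct] using this

lemma psd_entry_le_trace {K : Matrix (Fin m) (Fin m) ℝ} (hK : K.PosSemidef) (i j : Fin m) :
    |K i j| ≤ K.trace := by
  classical
  have hsymm : ∀ a b, K a b = K b a := by
    intro a b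
    have := hK.1
    rw [Matrix.IsHermitian, conjTranspose_eq_transpose_of_trivial] at this
    exact (congrFun (congrFun this b) a).symm ▸ rfl
  have hdiag : ∀ k, 0 ≤ K k k := psd_diag_nonneg hK
  have hKii : K i i ≤ K.trace := by
    rw [Matrix.trace]
    exact Finset.single_le_sum (fun k _ => hdiag k) (Finset.mem_univ i)
  have hKjj : K j j ≤ K.trace := by
    rw [Matrix.trace]
    exact Finset.single_le_sum (fun k _ => hdiag k) (Finset.mem_univ j)
  have hplus := hK.dotProduct_mulVec_nonneg (Pi.single i 1 + Pi.single j 1)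
  have hminus := hK.dotProduct_mulVec_nonneg (Pi.single i 1 - Pi.single j 1)
  simp only [star_trivial, mulVec_add, mulVec_sub, dotProduct_add, dotProduct_sub,
    add_dotProduct, sub_dotProduct, mulVec_single, dotProduct_single, single_dotProduct,
    one_mul, mul_one, Pi.smul_apply, col_apply, MulOpposite.op_one, one_smul] at hplus hminus
  have hji : K j i = K i j := hsymm j i
  rw [abs_le]
  constructor <;> nlinarith [hplus, hminus, hKii, hKjj, hji]


lemma posdef_of_psd_det_ne {K : Matrix (Fin m) (Fin m) ℝ}
    (h : K.PosSemidef) (hdet : K.det ≠ 0) : K.PosDef := by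
  classical
  refine PosDef.of_dotProduct_mulVec_pos h.1 fun x hx => ?_
  rcases lt_or_eq_of_le (h.dotProduct_mulVec_nonneg x) with hlt | heq
  · exact hlt
  · exfalso
    have hz : K *ᵥ x = 0 := (h.dotProduct_mulVec_zero_iff x).mp heq.symm
    have : x = 0 := by
      have h1 : K⁻¹ *ᵥ (K *ᵥ x) = x := by
        rw [mulVec_mulVec, nonsing_inv_mul _ hdet.isUnit, one_mulVec]
      rw [hz, mulVec_zero] at h1
      exact h1.symm
    exact hx this

lemma isClosed_psd : IsClosed {K : Matrix (Fin m) (Fin m) ℝ | K.PosSemidef} := by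
  have hset : {K : Matrix (Fin m) (Fin m) ℝ | K.PosSemidef} =
      {K : Matrix (Fin m) (Fin m) ℝ | Kᴴ = K} ∩
        ⋂ x : Fin m → ℝ, {K | 0 ≤ star x ⬝ᵥ K *ᵥ x} := by
    ext K
    simp only [Set.mem_setOf_eq, Set.mem_inter_iff, Set.mem_iInter]
    exact posSemidef_iff_dotProduct_mulVec
  rw [hset]
  refine IsClosed.inter (isClosed_eq ?_ continuous_id) (isClosed_iInter fun x => ?_)
  · exact continuous_id.matrix_conjTranspose
  · exact isClosed_le continuous_const
      (Continuous.dotProduct continuous_const (continuous_id.matrix_mulVec continuous_const))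


lemma sig_trace_lower {Sig : Matrix (Fin m) (Fin m) ℝ} {α : ℝ} (hα : 0 < α)
    (hquad : ∀ x, α * (x ⬝ᵥ x) ≤ x ⬝ᵥ Sig *ᵥ x) (hSig : Sig.IsHermitian)
    {K : Matrix (Fin m) (Fin m) ℝ} (hK : K.PosSemidef) :
    α * K.trace ≤ (Sig * K).trace := by
  have hpsd : (Sig - α • (1 : Matrix (Fin m) (Fin m) ℝ)).PosSemidef := by
    refine PosSemidef.of_dotProduct_mulVec_nonneg ?_ ?_
    · rw [Matrix.IsHermitian, conjTranspose_sub, conjTranspose_smul, conjTranspose_one,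
        hSig, star_trivial]
    · intro x
      have := hquad x
      simp only [star_trivial, sub_mulVec, dotProduct_sub, smul_mulVec, one_mulVec,
        dotProduct_smul, smul_eq_mul]
      linarith
  have h0 := trace_mul_psd_nonneg hpsd hK
  have hexp : ((Sig - α • (1 : Matrix (Fin m) (Fin m) ℝ)) * K).trace
      = (Sig * K).trace - α * K.trace := by
    rw [Matrix.sub_mul, smul_mul, Matrix.one_mul, trace_sub, trace_smul, smul_eq_mul]
  linarith [hexp ▸ h0]

lemma log_det_le {K : Matrix (Fin m) (Fin m) ℝ} (hK : K.PosDef) {β : ℝ} (hβ : 0 < β) :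
    Real.log K.det ≤ β * K.trace + m * (-1 - Real.log β) := by
  classical
  have hev := hK.eigenvalues_pos
  have hdet : K.det = ∏ i, hK.1.eigenvalues i := by
    have := hK.1.det_eq_prod_eigenvalues
    simpa using this
  have htr : K.trace = ∑ i, hK.1.eigenvalues i := trace_eq_sum_eigenvalues hK.1
  rw [hdet, Real.log_prod (fun i _ => (hev i).ne'), htr]
  have hterm : ∀ i, Real.log (hK.1.eigenvalues i) ≤ β * hK.1.eigenvalues i + (-1 - Real.log β) := by
    intro i
    have h1 : Real.log (β * hK.1.eigenvalues i) ≤ β * hK.1.eigenvalues i - 1 :=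
      Real.log_le_sub_one_of_pos (mul_pos hβ (hev i))
    rw [Real.log_mul hβ.ne' (hev i).ne'] at h1
    linarith
  calc ∑ i, Real.log (hK.1.eigenvalues i) ≤ ∑ i, (β * hK.1.eigenvalues i + (-1 - Real.log β)) :=
        Finset.sum_le_sum fun i _ => hterm i
    _ = β * ∑ i, hK.1.eigenvalues i + m * (-1 - Real.log β) := by
        rw [Finset.sum_add_distrib, ← Finset.mul_sum]
        simp [Finset.card_univ]
        ring

lemma mle_exists_of_fiber (L : Submodule ℝ (Matrix (Fin m) (Fin m) ℝ))
    (K₀ : Matrix (Fin m) (Fin m) ℝ) (hK₀L : K₀ ∈ L) (hK₀pd : K₀.PosDef)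
    (Sig : Matrix (Fin m) (Fin m) ℝ) (hSig : Sig.PosDef) :
    ∃ Khat ∈ L, Khat.PosDef ∧ ∀ K ∈ L, K.PosDef →
      Real.log K.det - (Sig * K).trace ≤ Real.log Khat.det - (Sig * Khat).trace := by
  classical
  obtain ⟨α, hα, hquad⟩ := posdef_quad_lower hSig
  set f : Matrix (Fin m) (Fin m) ℝ → ℝ := fun K => Real.log K.det - (Sig * K).trace with hf
  set c : ℝ := f K₀ with hc
  set R : ℝ := (2 / α) * (m * (-1 - Real.log (α / 2)) - c) with hR
  -- the modified superlevel set
  set Cs : Set (Matrix (Fin m) (Fin m) ℝ) :=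
    {K | K ∈ L ∧ K.PosSemidef ∧ Real.exp (c + (Sig * K).trace) ≤ K.det} with hCs
  have hmem_iff : ∀ K, K ∈ Cs ↔ K ∈ L ∧ K.PosDef ∧ c ≤ f K := by
    intro K
    constructor
    · rintro ⟨h1, h2, h3⟩
      have hdetpos : 0 < K.det := lt_of_lt_of_le (Real.exp_pos _) h3
      have hpd : K.PosDef := posdef_of_psd_det_ne h2 hdetpos.ne'
      refine ⟨h1, hpd, ?_⟩
      have := (Real.le_log_iff_exp_le hdetpos).mpr h3
      rw [hf]; simp only; linarith
    · rintro ⟨h1, h2, h3⟩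
      refine ⟨h1, h2.posSemidef, ?_⟩
      have hdetpos : 0 < K.det := h2.det_pos
      rw [← Real.le_log_iff_exp_le hdetpos]
      rw [hf] at h3; simp only at h3; linarith
  -- trace bound on Cs
  have htrace_bd : ∀ K, K.PosDef → c ≤ f K → K.trace ≤ R := by
    intro K hpd hcf
    have h1 : α * K.trace ≤ (Sig * K).trace :=
      sig_trace_lower hα hquad hSig.1 hpd.posSemidef
    have h2 : Real.log K.det ≤ (α / 2) * K.trace + m * (-1 - Real.log (α / 2)) :=
      log_det_le hpd (by positivity)
    rw [hf] at hcf; simp only at hcf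
    have e : α / 2 * K.trace = (α * K.trace) / 2 := by ring
    rw [e] at h2
    rw [hR, div_mul_eq_mul_div, le_div_iff₀ hα, mul_comm]
    clear_value c R
    linarith [h1, h2, hcf]
  -- Cs is closed
  have hclosed : IsClosed Cs := by
    have : Cs = (L : Set (Matrix (Fin m) (Fin m) ℝ)) ∩
        ({K : Matrix (Fin m) (Fin m) ℝ | K.PosSemidef} ∩
          {K | Real.exp (c + (Sig * K).trace) ≤ K.det}) := by
      ext K; simp [hCs, Set.mem_inter_iff, and_assoc]
    rw [this]
    refine (Submodule.closed_of_finiteDimensional L).inter (isClosed_psd.inter ?_)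
    exact isClosed_le
      (Real.continuous_exp.comp (continuous_const.add
        ((continuous_const.matrix_mul continuous_id).matrix_trace)))
      continuous_id.matrix_det
  -- Cs is compact
  have hcompact : IsCompact Cs := by
    have hbox : IsCompact (Set.univ.pi fun _ : Fin m =>
        Set.univ.pi fun _ : Fin m => Set.Icc (-R) R : Set (Matrix (Fin m) (Fin m) ℝ)) :=
      isCompact_univ_pi fun i => isCompact_univ_pi fun j => isCompact_Icc
    refine hbox.of_isClosed_subset hclosed ?_
    intro K hK
    obtain ⟨h1, h2, h3⟩ := (hmem_iff K).mp hK
    have htr := htrace_bd K h2 h3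
    intro i _
    intro j _
    have := psd_entry_le_trace h2.posSemidef i j
    have habs : |K i j| ≤ R := le_trans this htr
    exact Set.mem_Icc.mpr (abs_le.mp habs)
  -- Cs is nonempty
  have hne : Cs.Nonempty := by
    refine ⟨K₀, (hmem_iff K₀).mpr ⟨hK₀L, hK₀pd, le_refl _⟩⟩
  -- f continuous on Cs
  have hfc : ContinuousOn f Cs := by
    intro K hK
    obtain ⟨h1, h2, h3⟩ := (hmem_iff K).mp hK
    refine ContinuousAt.continuousWithinAt ?_
    refine ContinuousAt.sub ?_ ?_
    · exact (Real.continuousAt_log h2.det_pos.ne').comp continuous_id.matrix_det.continuousAt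
    · exact ((continuous_const.matrix_mul continuous_id).matrix_trace).continuousAt
  obtain ⟨Khat, hKhatmem, hmax⟩ := hcompact.exists_isMaxOn hne hfc
  obtain ⟨hKhatL, hKhatpd, hKhatc⟩ := (hmem_iff Khat).mp hKhatmem
  refine ⟨Khat, hKhatL, hKhatpd, ?_⟩
  intro K hKL hKpd
  by_cases hcase : c ≤ f K
  · exact hmax ((hmem_iff K).mpr ⟨hKL, hKpd, hcase⟩)
  · push_neg at hcase
    have h0 : f K₀ ≤ f Khat := hmax ((hmem_iff K₀).mpr ⟨hK₀L, hK₀pd, le_refl _⟩)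
    have : f K ≤ f Khat := le_trans hcase.le (le_trans (le_refl c) (hc ▸ h0))
    exact this


lemma fiber_of_mle (L : Submodule ℝ (Matrix (Fin m) (Fin m) ℝ))
    (hLsymm : ∀ K ∈ L, (K : Matrix (Fin m) (Fin m) ℝ).IsSymm)
    (S : Matrix (Fin m) (Fin m) ℝ)
    (Khat : Matrix (Fin m) (Fin m) ℝ) (hKhatL : Khat ∈ L) (hKhatpd : Khat.PosDef)
    (hmax : ∀ K ∈ L, Matrix.PosDef K →
      Real.log K.det - (S * K).trace ≤ Real.log Khat.det - (S * Khat).trace)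
    (K : Matrix (Fin m) (Fin m) ℝ) (hKL : K ∈ L) :
    (Khat⁻¹ * K).trace = (S * K).trace := by
  classical
  obtain ⟨α, hα, hquad⟩ := posdef_quad_lower hKhatpd
  set Cb : ℝ := ((∑ i, ∑ j, |K i j|) + 1 : ℝ) with hCb
  have hCbpos : 0 < Cb := by
    rw [hCb]
    have : 0 ≤ ∑ i, ∑ j, |K i j| :=
      Finset.sum_nonneg fun i _ => Finset.sum_nonneg fun j _ => abs_nonneg _
    linarith
  set δ : ℝ := α / Cb with hδ
  have hδpos : 0 < δ := div_pos hα hCbpos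
  have hherm : ∀ N ∈ L, N.IsHermitian := by
    intro N hN
    rw [Matrix.IsHermitian, conjTranspose_eq_transpose_of_trivial]
    exact hLsymm N hN
  -- positive definiteness of perturbations
  have hpert : ∀ t : ℝ, |t| < δ → (Khat + t • K).PosDef := by
    intro t ht
    refine PosDef.of_dotProduct_mulVec_pos ?_ ?_
    · have h1 : Khatᴴ = Khat := hherm Khat hKhatL
      have h2 : Kᴴ = K := hherm K hKL
      rw [Matrix.IsHermitian, conjTranspose_add, conjTranspose_smul, star_trivial, h1, h2]
    · intro x hx
      have hdotpos : 0 < x ⬝ᵥ x := by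
        rcases lt_or_eq_of_le (dot_self_nonneg x) with h | h
        · exact h
        · exact absurd (dotProduct_self_eq_zero.mp h.symm) hx
      have h1 := hquad x
      have h2 : |x ⬝ᵥ K *ᵥ x| ≤ ((∑ i, ∑ j, |K i j|)) * (x ⬝ᵥ x) := abs_quad_le K x
      have h3 : |t * (x ⬝ᵥ K *ᵥ x)| ≤ |t| * (Cb * (x ⬝ᵥ x)) := by
        rw [abs_mul]
        refine mul_le_mul_of_nonneg_left (le_trans h2 ?_) (abs_nonneg t)
        refine mul_le_mul_of_nonneg_right ?_ (dot_self_nonneg x)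
        rw [hCb]; linarith
      have h4 : |t| * (Cb * (x ⬝ᵥ x)) < α * (x ⬝ᵥ x) := by
        have : |t| * Cb < α := by
          rw [← lt_div_iff₀ hCbpos]
          exact ht
        calc |t| * (Cb * (x ⬝ᵥ x)) = (|t| * Cb) * (x ⬝ᵥ x) := by ring
          _ < α * (x ⬝ᵥ x) := by exact mul_lt_mul_of_pos_right this hdotpos
      have h5 : -(t * (x ⬝ᵥ K *ᵥ x)) < α * (x ⬝ᵥ x) := by
        have := neg_abs_le (t * (x ⬝ᵥ K *ᵥ x))
        linarith [abs_le.mp (le_refl |t * (x ⬝ᵥ K *ᵥ x)|)]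
      rw [star_trivial, add_mulVec, dotProduct_add, smul_mulVec, dotProduct_smul,
        smul_eq_mul]
      linarith
  -- derivative argument
  set M : Matrix (Fin m) (Fin m) ℝ := Khat⁻¹ * K with hM
  have hdetKhat : (0:ℝ) < Khat.det := hKhatpd.det_pos
  have hfact : ∀ t : ℝ, Khat + t • K = Khat * (1 + t • M) := by
    intro t
    rw [hM, Matrix.mul_add, Matrix.mul_one, mul_smul_comm, ← Matrix.mul_assoc,
      mul_nonsing_inv _ hdetKhat.ne'.isUnit, Matrix.one_mul]
  set q : Polynomial ℝ := (Matrix.det (1 + (X : Polynomial ℝ) • M.map Polynomial.C)).divX.divX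
    with hq
  have hdet : ∀ t : ℝ, (Khat + t • K).det = Khat.det * (1 + M.trace * t + q.eval t * t ^ 2) := by
    intro t
    rw [hfact, det_mul, Matrix.det_one_add_smul t M]
  have hD : HasDerivAt (fun t : ℝ => (Khat + t • K).det) (Khat.det * M.trace) 0 := by
    have ha : HasDerivAt (fun t : ℝ => M.trace * t) M.trace 0 := by
      simpa using (hasDerivAt_id (0:ℝ)).const_mul M.trace
    have hb : HasDerivAt (fun t : ℝ => q.eval t * t ^ 2)
        (q.derivative.eval 0 * 0 ^ 2 + q.eval 0 * (↑2 * 0 ^ 1)) 0 :=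
      (q.hasDerivAt 0).mul (hasDerivAt_pow 2 0)
    have h1 : HasDerivAt (fun t : ℝ => 1 + M.trace * t + q.eval t * t ^ 2) M.trace 0 := by
      have := (ha.const_add 1).add hb
      exact this.congr_deriv (by simp)
    have h2 := h1.const_mul Khat.det
    have heq : (fun t : ℝ => Khat.det * (1 + M.trace * t + q.eval t * t ^ 2))
        = fun t : ℝ => (Khat + t • K).det := funext fun t => (hdet t).symm
    rw [heq] at h2
    exact h2
  have hlog : HasDerivAt (fun t : ℝ => Real.log (Khat + t • K).det) M.trace 0 := by
    have h0 : (Khat + (0:ℝ) • K).det ≠ 0 := by simpa using hdetKhat.ne'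
    have hcomp := (Real.hasDerivAt_log h0).comp 0 hD
    have hval : ((Khat + (0:ℝ) • K).det)⁻¹ * (Khat.det * M.trace) = M.trace := by
      have : (Khat + (0:ℝ) • K).det = Khat.det := by simp
      rw [this]
      field_simp
    rw [hval] at hcomp
    exact hcomp
  have htr : HasDerivAt (fun t : ℝ => (S * (Khat + t • K)).trace) ((S * K).trace) 0 := by
    have heq : (fun t : ℝ => (S * (Khat + t • K)).trace)
        = fun t : ℝ => (S * Khat).trace + t * (S * K).trace := by
      funext t
      rw [Matrix.mul_add, trace_add, mul_smul_comm, trace_smul, smul_eq_mul]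
    rw [heq]
    simpa using ((hasDerivAt_id (0:ℝ)).mul_const ((S * K).trace)).const_add ((S * Khat).trace)
  have hg : HasDerivAt
      (fun t : ℝ => Real.log (Khat + t • K).det - (S * (Khat + t • K)).trace)
      (M.trace - (S * K).trace) 0 := hlog.sub htr
  have hloc : IsLocalMax
      (fun t : ℝ => Real.log (Khat + t • K).det - (S * (Khat + t • K)).trace) 0 := by
    filter_upwards [Metric.ball_mem_nhds (0:ℝ) hδpos] with t ht
    have habs : |t| < δ := by simpa [Real.dist_eq] using ht
    have hmem : Khat + t • K ∈ L := L.add_mem hKhatL (L.smul_mem t hKL)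
    have h := hmax _ hmem (hpert t habs)
    simpa using h
  have hzero := hloc.hasDerivAt_eq_zero hg
  have hfin : M.trace = (S * K).trace := sub_eq_zero.mp hzero
  rw [hM] at hfin
  exact hfin

end Helpers

/-- Existence of the maximum likelihood estimate: the log-likelihood
`K ↦ log det K − trace(S·K)` attains a maximum on the positive definite
matrices of the linear space `L` of symmetric matrices (which contains a
positive definite matrix) if and only if the fiber
`{Σ ≻ 0 : trace(Σ·K) = trace(S·K) for all K ∈ L}` is non-empty. -/
theorem mle_exists_iff_fiber_nonempty
    (m : ℕ) (L : Submodule ℝ (Matrix (Fin m) (Fin m) ℝ))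
    (hLsymm : ∀ K ∈ L, (K : Matrix (Fin m) (Fin m) ℝ).IsSymm)
    (hLpd : ∃ K ∈ L, Matrix.PosDef K)
    (S : Matrix (Fin m) (Fin m) ℝ) (hS : S.IsSymm) :
    (∃ Khat ∈ L, Matrix.PosDef Khat ∧
        ∀ K ∈ L, Matrix.PosDef K →
          Real.log K.det - (S * K).trace
            ≤ Real.log Khat.det - (S * Khat).trace) ↔
      (∃ Sig : Matrix (Fin m) (Fin m) ℝ, Sig.PosDef ∧
        ∀ K ∈ L, (Sig * K).trace = (S * K).trace) := by
  constructor
  · rintro ⟨Khat, hKhatL, hKhatpd, hmax⟩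
    exact ⟨Khat⁻¹, hKhatpd.inv,
      fun K hK => fiber_of_mle L hLsymm S Khat hKhatL hKhatpd hmax K hK⟩
  · rintro ⟨Sig, hSig, hfib⟩
    obtain ⟨K₀, hK₀L, hK₀pd⟩ := hLpd
    obtain ⟨Khat, h1, h2, h3⟩ := mle_exists_of_fiber L K₀ hK₀L hK₀pd Sig hSig
    refine ⟨Khat, h1, h2, fun K hKL hKpd => ?_⟩
    have h := h3 K hKL hKpd
    rwa [hfib K hKL, hfib Khat h1] at h
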